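/- Let m ≥ 0, let k ∈ ℂ with 0 < |k| < 1, and let λ ∈ ℂ satisfy λ² = m² + 2 − k − k⁻¹ (so that λ² ≠ m² and λ² ≠ m² + 4). Then the squared spectral norm of T₁(k) is given exactly by |T₁(k)|² = |k|² · ( |λ + m|² + |λ − m|² + (|k| + |k|⁻¹) |λ² − m²| ) / ( |λ² − m²| · |λ² − m² − 4| ). -/

import Mathlib

open scoped ComplexOrder
open Matrix

noncomputable section

abbrev Mat2 : Type := Matrix (Fin 2) (Fin 2) ℂ
abbrev Vec2 : Type := EuclideanSpace ℂ (Fin 2)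
abbrev Hsp : Type := lp (fun _ : ℤ => Vec2) 2

/-- A `2×2` complex matrix acting on `ℂ²` as a continuous linear map. -/
def mAct (A : Mat2) : Vec2 →L[ℂ] Vec2 := Matrix.toEuclideanCLM (𝕜 := ℂ) A

/-- The spectral (operator) norm of a `2×2` complex matrix. -/
def specNorm (A : Mat2) : ℝ := ‖mAct A‖

/-- The Hilbert–Schmidt (Frobenius) norm of a `2×2` complex matrix. -/
def hsNorm (A : Mat2) : ℝ := Real.sqrt (∑ i, ∑ j, ‖A i j‖ ^ 2)

def bMat (m : ℝ) : Mat2 := !![(-m : ℂ), 1; 1, (m : ℂ)]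

def aMat : Mat2 := !![0, 0; -1, 0]

/-- `D0` is the free discrete Dirac operator with mass `m`. -/
def IsFreeDirac (m : ℝ) (D0 : Hsp →L[ℂ] Hsp) : Prop :=
  ∀ u : Hsp, ∀ n : ℤ,
    (D0 u) n = mAct aMat.transpose (u (n - 1)) + mAct (bMat m) (u n) + mAct aMat (u (n + 1))

/-- `Vop` is the block-diagonal operator with blocks `υ n`. -/
def IsBlockDiagOp (υ : ℤ → Mat2) (Vop : Hsp →L[ℂ] Hsp) : Prop :=
  ∀ u : Hsp, ∀ n : ℤ, (Vop u) n = mAct (υ n) (u n)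

/-- The spectrum `[−√(m²+4), −m] ∪ [m, √(m²+4)]` as a subset of `ℂ`. -/
def sigma0 (m : ℝ) : Set ℂ :=
  Complex.ofReal '' (Set.Icc (-Real.sqrt (m ^ 2 + 4)) (-m) ∪ Set.Icc m (Real.sqrt (m ^ 2 + 4)))

def T0mat (m : ℝ) (lam k : ℂ) : Mat2 :=
  (k⁻¹ - k)⁻¹ • !![lam - m, 1 - k; 1 - k, lam + m]

def T1mat (m : ℝ) (lam k : ℂ) : Mat2 :=
  (k * (k⁻¹ - k)⁻¹) • !![lam - m, 1 - k; 1 - k⁻¹, lam + m]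

def Tmat (m : ℝ) (lam k : ℂ) : ℤ → Mat2 := fun j =>
  if j = 0 then T0mat m lam k
  else if 0 < j then k ^ (j.toNat - 1) • T1mat m lam k
  else (k ^ ((-j).toNat - 1) • T1mat m lam k).transpose

/-- The square root of a positive semidefinite matrix, as defined in Mathlib (Dec 2024). -/
def Matrix.PosSemidef.sqrt {n : Type*} [Fintype n] [DecidableEq n] {A : Matrix n n ℂ}
    (hA : A.PosSemidef) : Matrix n n ℂ :=
  (hA.1.eigenvectorUnitary : Matrix n n ℂ) * diagonal (((↑) : ℝ → ℂ) ∘ (√·) ∘ hA.1.eigenvalues) *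
    (star hA.1.eigenvectorUnitary : Matrix n n ℂ)

theorem Matrix.PosSemidef.posSemidef_sqrt {n : Type*} [Fintype n] [DecidableEq n]
    {A : Matrix n n ℂ} (hA : A.PosSemidef) : PosSemidef hA.sqrt := by
  have hD : PosSemidef (diagonal (((↑) : ℝ → ℂ) ∘ (√·) ∘ hA.1.eigenvalues)) := by
    refine posSemidef_diagonal_iff.mpr fun i ↦ ?_
    simp only [Function.comp_apply]
    exact Complex.zero_le_real.mpr (Real.sqrt_nonneg _)
  exact hD.mul_mul_conjTranspose_same (hA.1.eigenvectorUnitary : Matrix n n ℂ)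

def wMat (υ : ℤ → Mat2) (n : ℤ) : Mat2 :=
  (Matrix.posSemidef_conjTranspose_mul_self (υ n)).sqrt

def sqrtwMat (υ : ℤ → Mat2) (n : ℤ) : Mat2 :=
  (Matrix.posSemidef_conjTranspose_mul_self (υ n)).posSemidef_sqrt.sqrt

/-- The Birman–Schwinger operator `K(z) = √W (D₀ − z)⁻¹ U √W`. -/
def Kop (D0 sW Uop : Hsp →L[ℂ] Hsp) (z : ℂ) : Hsp →L[ℂ] Hsp :=
  sW * Ring.inverse (D0 - z • (1 : Hsp →L[ℂ] Hsp)) * Uop * sW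

/-- The element of `ℓ²(ℤ, ℂ²)` supported at site `j` equal to the `β`-th standard basis vector. -/
def deltaVec (j : ℤ) (β : Fin 2) : Hsp := lp.single 2 j (EuclideanSpace.single β (1 : ℂ))



theorem T1_rankone (m : ℝ) (k lam q : ℂ)
    (hq : (lam - m) * q = 1 - k) (hq2 : (1 - k⁻¹) * q = lam + m) :
    mAct (T1mat m lam k) =
      ((innerSL ℂ ((WithLp.equiv 2 _).symm ![1, (starRingEnd ℂ) q] : Vec2)).smulRight
        ((WithLp.equiv 2 _).symm ![(k * (k⁻¹ - k)⁻¹) * (lam - m), (k * (k⁻¹ - k)⁻¹) * (1 - k⁻¹)] : Vec2)) := by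
  refine ContinuousLinearMap.ext fun x => ?_
  apply (WithLp.equiv 2 _).injective
  funext i
  simp only [mAct]
  rw [WithLp.equiv_apply, Matrix.ofLp_toEuclideanCLM]
  simp only [ContinuousLinearMap.smulRight_apply, innerSL_apply_apply, T1mat]
  have hinner : (inner ℂ ((WithLp.equiv 2 _).symm ![1, (starRingEnd ℂ) q] : Vec2) x : ℂ)
      = x 0 + q * x 1 := by
    simp [PiLp.inner_apply, Fin.sum_univ_two, mul_comm]
  rw [hinner]
  fin_cases i
  · simp [Matrix.mulVec, dotProduct, Fin.sum_univ_two, Matrix.smul_apply]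
    linear_combination (-(k * (k⁻¹ - k)⁻¹ * x 1)) * hq
  · simp [Matrix.mulVec, dotProduct, Fin.sum_univ_two, Matrix.smul_apply]
    linear_combination (-(k * (k⁻¹ - k)⁻¹ * x 1)) * hq2

theorem norm_sq_pair (v : Vec2) :
    ‖v‖ ^ 2 = ‖v 0‖ ^ 2 + ‖v 1‖ ^ 2 := by
  rw [EuclideanSpace.norm_eq, Real.sq_sqrt (by positivity)]
  simp [Fin.sum_univ_two]

/-- Exact formula for the squared spectral norm of `T₁(k)`. -/
theorem stmt9 (m : ℝ) (hm : 0 ≤ m) (k lam : ℂ)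
    (hk0 : 0 < ‖k‖) (hk1 : ‖k‖ < 1)
    (hrel : lam ^ 2 = (m : ℂ) ^ 2 + 2 - k - k⁻¹) :
    specNorm (T1mat m lam k) ^ 2 =
      ‖k‖ ^ 2 *
        (‖lam + (m : ℂ)‖ ^ 2 + ‖lam - (m : ℂ)‖ ^ 2 +
          (‖k‖ + (‖k‖)⁻¹) * ‖lam ^ 2 - (m : ℂ) ^ 2‖) /
        (‖lam ^ 2 - (m : ℂ) ^ 2‖ * ‖lam ^ 2 - (m : ℂ) ^ 2 - 4‖) := by
  have hk : k ≠ 0 := by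
    intro h; simp [h] at hk0
  have hk1' : k ≠ 1 := by
    intro h; rw [h] at hk1; simp at hk1
  have hkm1 : k ≠ -1 := by
    intro h; rw [h] at hk1; simp at hk1
  have h1k : (1 : ℂ) - k ≠ 0 := sub_ne_zero.mpr (fun h => hk1' h.symm)
  have hP : (1 : ℂ) + k ≠ 0 := by
    intro h; apply hkm1; linear_combination h
  have hd : (1 : ℂ) - k⁻¹ = -((1 - k) / k) := by
    rw [← neg_div, neg_sub, sub_div, div_self hk, one_div]
  have h1k' : (1 : ℂ) - k⁻¹ ≠ 0 := by
    rw [hd]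
    simp [div_ne_zero h1k hk]
  have hprod : (lam - m) * (lam + m) = (1 - k) * (1 - k⁻¹) := by
    field_simp [hk]
    linear_combination k * hrel - mul_inv_cancel₀ hk
  have ha : lam - (m : ℂ) ≠ 0 := by
    intro h
    rw [h, zero_mul] at hprod
    exact (mul_ne_zero h1k h1k') hprod.symm
  have he : lam + (m : ℂ) ≠ 0 := by
    intro h
    rw [h, mul_zero] at hprod
    exact (mul_ne_zero h1k h1k') hprod.symm
  set q : ℂ := (1 - k) / (lam - m) with hqdef
  have hq : (lam - m) * q = 1 - k := by
    rw [hqdef]; field_simp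
  have hq2 : (1 - k⁻¹) * q = lam + m := by
    apply mul_left_cancel₀ ha
    calc (lam - m) * ((1 - k⁻¹) * q) = (1 - k⁻¹) * ((lam - m) * q) := by ring
      _ = (1 - k⁻¹) * (1 - k) := by rw [hq]
      _ = (lam - m) * (lam + m) := by rw [hprod]; ring
  -- norm via rank-one form
  rw [specNorm, T1_rankone m k lam q hq hq2,
    ContinuousLinearMap.norm_smulRight_apply, innerSL_apply_norm, mul_pow,
    norm_sq_pair, norm_sq_pair]
  simp only [WithLp.equiv_symm_apply, PiLp.toLp_apply, Matrix.cons_val_zero, Matrix.cons_val_one,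
    Matrix.head_cons]
  -- abbreviations
  set K := ‖k‖ with hK
  set A := ‖lam - m‖ with hA
  set E := ‖lam + m‖ with hE
  set B := ‖1 - k‖ with hB
  set P := ‖1 + k‖ with hPdef
  have hKpos : 0 < K := hk0
  have hApos : 0 < A := by rw [hA]; exact (norm_pos_iff.mpr ha)
  have hEpos : 0 < E := by rw [hE]; exact (norm_pos_iff.mpr he)
  have hBpos : 0 < B := by rw [hB]; exact (norm_pos_iff.mpr h1k)
  have hPpos : 0 < P := by rw [hPdef]; exact (norm_pos_iff.mpr hP)
  have habsq : ‖(starRingEnd ℂ) q‖ = B / A := by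
    rw [Complex.norm_conj, hqdef, norm_div, ← hB, ← hA]
  have hfac : k⁻¹ - k = (1 - k) * (1 + k) / k := by
    field_simp [hk]; ring
  have hc : k * (k⁻¹ - k)⁻¹ = k ^ 2 / ((1 - k) * (1 + k)) := by
    rw [hfac]
    field_simp [hk, h1k, hP]
  have habsc : ‖k * (k⁻¹ - k)⁻¹‖ = K ^ 2 / (B * P) := by
    rw [hc, norm_div, norm_mul, norm_pow, ← hK, ← hB, ← hPdef]
  have habsd : ‖1 - k⁻¹‖ = B / K := by
    rw [hd, norm_neg, norm_div, ← hB, ← hK]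
  have hrw1 : ‖lam ^ 2 - (m : ℂ) ^ 2‖ = A * E := by
    have : lam ^ 2 - (m : ℂ) ^ 2 = (lam - m) * (lam + m) := by ring
    rw [this, norm_mul, ← hA, ← hE]
  have hrw2c : lam ^ 2 - (m : ℂ) ^ 2 - 4 = -((1 + k) ^ 2 / k) := by
    field_simp [hk]
    linear_combination k * hrel - mul_inv_cancel₀ hk
  have hrw2 : ‖lam ^ 2 - (m : ℂ) ^ 2 - 4‖ = P ^ 2 / K := by
    rw [hrw2c, norm_neg, norm_div, norm_pow, ← hK, ← hPdef]
  have hAE : K * (A * E) = B ^ 2 := by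
    have := congrArg (fun z : ℂ => ‖z‖) hprod
    rw [norm_mul, norm_mul, ← hA, ← hE, ← hB, habsd] at this
    rw [this]
    field_simp
  have hEval : E = B ^ 2 / (K * A) := by
    field_simp
    linear_combination hAE
  have habskk : ‖k⁻¹ - k‖ = B * P / K := by
    rw [hfac, norm_div, norm_mul, ← hB, ← hPdef, ← hK]
  simp only [norm_mul, norm_inv, habskk, habsq, habsd, hrw1, hrw2, norm_one, one_pow,
    ← hK, ← hA]
  rw [hEval]
  field_simp
  ring
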